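/- Let p ≥ 2 be an integer, 0 < λ₁ ≤ λ₂, x ∈ H, and y₁, y₂ ∈ H with x − yᵢ ∈ λᵢ • A(yᵢ) for i = 1, 2. Writing φ(λᵢ, x) = λᵢ^{1/(p−1)}‖x − yᵢ‖, one has (λ₂/λ₁)^{1/(p−1)} φ(λ₁, x) ≤ φ(λ₂, x) ≤ (λ₂/λ₁)^{p/(p−1)} φ(λ₁, x). Moreover, for any fixed λ > 0 and any y with x − y ∈ λ • A(y), one has ‖x − y‖ = 0 if and only if 0 ∈ A x. -/

import Mathlib

open scoped Pointwise
open RealInnerProductSpace Filter Topology Set Metric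

private lemma aux_inner {H : Type*} [NormedAddCommGroup H] [InnerProductSpace ℝ H]
    (c d : ℝ) (a b : H) :
    ⟪c • a - d • b, b - a⟫ = (c + d) * ⟪a, b⟫ - c * ‖a‖ ^ 2 - d * ‖b‖ ^ 2 := by
  simp only [inner_sub_left, inner_sub_right, real_inner_smul_left,
    real_inner_self_eq_norm_sq, real_inner_comm b a]
  ring

private lemma aux_alg (l1 l2 s t : ℝ) (h1 : 0 < l1) (h2 : 0 < l2) (h12 : l1 ≤ l2)
    (hs : 0 ≤ s) (ht : 0 ≤ t)
    (hkey : l1⁻¹ * s ^ 2 + l2⁻¹ * t ^ 2 ≤ (l1⁻¹ + l2⁻¹) * (s * t)) :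
    s ≤ t ∧ l1 * t ≤ l2 * s := by
  have hkey2 : l2 * s ^ 2 + l1 * t ^ 2 ≤ (l1 + l2) * (s * t) := by
    have := mul_le_mul_of_nonneg_left hkey (mul_pos h1 h2).le
    have e1 : l1 * l2 * (l1⁻¹ * s ^ 2 + l2⁻¹ * t ^ 2) = l2 * s ^ 2 + l1 * t ^ 2 := by
      field_simp
    have hi1 : l1 * l1⁻¹ = 1 := mul_inv_cancel₀ h1.ne'
    have hi2 : l2 * l2⁻¹ = 1 := mul_inv_cancel₀ h2.ne'
    have e2 : l1 * l2 * ((l1⁻¹ + l2⁻¹) * (s * t)) = (l1 + l2) * (s * t) := by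
      have : l1 * l2 * ((l1⁻¹ + l2⁻¹) * (s * t))
          = (l1 * l1⁻¹) * (l2 * (s * t)) + (l2 * l2⁻¹) * (l1 * (s * t)) := by ring
      rw [this, hi1, hi2]; ring
    rw [e1, e2] at this
    exact this
  constructor
  · by_contra h
    push_neg at h
    nlinarith [mul_pos (sub_pos.2 h) h1, mul_nonneg ht (sub_pos.2 h).le,
      mul_le_mul_of_nonneg_right h12 (mul_nonneg hs (sub_pos.2 h).le)]
  · by_contra h
    push_neg at h
    have hts : s < t := by nlinarith
    nlinarith [mul_pos h1 (sub_pos.2 hts), mul_nonneg hs (sub_pos.2 hts).le]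

set_option maxHeartbeats 1000000 in
/-- Monotonicity bounds for `φ(λ, x) = λ^{1/(p-1)} ‖x - (I + λA)⁻¹x‖`
in `λ`, and `φ(λ, x) = 0` iff `0 ∈ A x`. -/
theorem stmt_1 {H : Type*} [NormedAddCommGroup H] [InnerProductSpace ℝ H] [CompleteSpace H]
    (A : H → Set H)
    (hmono : ∀ x y u v : H, u ∈ A x → v ∈ A y → 0 ≤ ⟪u - v, x - y⟫)
    (p : ℕ) (hp : 2 ≤ p)
    (lam₁ lam₂ : ℝ) (hlam₁ : 0 < lam₁) (hlam₁₂ : lam₁ ≤ lam₂)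
    (x y₁ y₂ : H)
    (hy₁ : x - y₁ ∈ lam₁ • A y₁) (hy₂ : x - y₂ ∈ lam₂ • A y₂) :
    ((lam₂ / lam₁) ^ (1 / ((p : ℝ) - 1)) * (lam₁ ^ (1 / ((p : ℝ) - 1)) * ‖x - y₁‖)
        ≤ lam₂ ^ (1 / ((p : ℝ) - 1)) * ‖x - y₂‖
      ∧ lam₂ ^ (1 / ((p : ℝ) - 1)) * ‖x - y₂‖
        ≤ (lam₂ / lam₁) ^ ((p : ℝ) / ((p : ℝ) - 1)) * (lam₁ ^ (1 / ((p : ℝ) - 1)) * ‖x - y₁‖))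
    ∧ (∀ lam : ℝ, 0 < lam → ∀ y : H, x - y ∈ lam • A y → (‖x - y‖ = 0 ↔ 0 ∈ A x)) := by
  have hlam₂ : 0 < lam₂ := lt_of_lt_of_le hlam₁ hlam₁₂
  obtain ⟨u, hu, hulam⟩ := hy₁
  obtain ⟨v, hv, hvlam⟩ := hy₂
  simp only at hulam hvlam
  have hu' : u = lam₁⁻¹ • (x - y₁) := by
    rw [← hulam, smul_smul, inv_mul_cancel₀ hlam₁.ne', one_smul]
  have hv' : v = lam₂⁻¹ • (x - y₂) := by
    rw [← hvlam, smul_smul, inv_mul_cancel₀ hlam₂.ne', one_smul]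
  have key := hmono y₁ y₂ u v hu hv
  have hy12 : y₁ - y₂ = (x - y₂) - (x - y₁) := by abel
  rw [hy12, hu', hv', aux_inner] at key
  have hinner : ⟪x - y₁, x - y₂⟫ ≤ ‖x - y₁‖ * ‖x - y₂‖ := real_inner_le_norm _ _
  have hkeyineq : lam₁⁻¹ * ‖x - y₁‖ ^ 2 + lam₂⁻¹ * ‖x - y₂‖ ^ 2
      ≤ (lam₁⁻¹ + lam₂⁻¹) * (‖x - y₁‖ * ‖x - y₂‖) := by
    have hsum : (0:ℝ) ≤ lam₁⁻¹ + lam₂⁻¹ := by positivity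
    nlinarith [mul_le_mul_of_nonneg_left hinner hsum]
  obtain ⟨h1, h2⟩ := aux_alg lam₁ lam₂ ‖x - y₁‖ ‖x - y₂‖ hlam₁ hlam₂ hlam₁₂
    (norm_nonneg _) (norm_nonneg _) hkeyineq
  have hpR0 : (0 : ℝ) < (p : ℝ) - 1 := by
    have : (2 : ℝ) ≤ (p : ℝ) := by exact_mod_cast hp
    linarith
  have hdiv : (lam₂ / lam₁) ^ (1 / ((p : ℝ) - 1)) * lam₁ ^ (1 / ((p : ℝ) - 1))
      = lam₂ ^ (1 / ((p : ℝ) - 1)) := by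
    rw [Real.div_rpow hlam₂.le hlam₁.le, div_mul_cancel₀]
    exact (Real.rpow_pos_of_pos hlam₁ _).ne'
  refine ⟨⟨?_, ?_⟩, ?_⟩
  · rw [← mul_assoc, hdiv]
    exact mul_le_mul_of_nonneg_left h1 (Real.rpow_pos_of_pos hlam₂ _).le
  · have hrpow2 : (lam₂ / lam₁) ^ ((p : ℝ) / ((p : ℝ) - 1))
        = (lam₂ / lam₁) * ((lam₂ / lam₁) ^ (1 / ((p : ℝ) - 1))) := by
      have hE : (p : ℝ) / ((p : ℝ) - 1) = 1 + 1 / ((p : ℝ) - 1) := by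
        field_simp
        ring
      rw [hE, Real.rpow_add (div_pos hlam₂ hlam₁), Real.rpow_one]
    rw [hrpow2]
    have heq : (lam₂ / lam₁) * (lam₂ / lam₁) ^ (1 / ((p : ℝ) - 1))
        * (lam₁ ^ (1 / ((p : ℝ) - 1)) * ‖x - y₁‖)
        = (lam₂ / lam₁) * ((lam₂ / lam₁) ^ (1 / ((p : ℝ) - 1)) * lam₁ ^ (1 / ((p : ℝ) - 1)))
          * ‖x - y₁‖ := by ring
    rw [heq, hdiv]
    have ht2 : ‖x - y₂‖ ≤ (lam₂ / lam₁) * ‖x - y₁‖ := by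
      rw [div_mul_eq_mul_div, le_div_iff₀ hlam₁]
      nlinarith
    calc lam₂ ^ (1 / ((p : ℝ) - 1)) * ‖x - y₂‖
        ≤ lam₂ ^ (1 / ((p : ℝ) - 1)) * ((lam₂ / lam₁) * ‖x - y₁‖) :=
          mul_le_mul_of_nonneg_left ht2 (Real.rpow_pos_of_pos hlam₂ _).le
      _ = lam₂ / lam₁ * lam₂ ^ (1 / ((p : ℝ) - 1)) * ‖x - y₁‖ := by ring
  · intro lam hlam y hy
    obtain ⟨w, hw, hwl⟩ := hy
    simp only at hwl
    constructor
    · intro hn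
      have hxy : x - y = 0 := norm_eq_zero.mp hn
      have hxeq : x = y := by rwa [sub_eq_zero] at hxy
      have hw0 : w = 0 := by
        have hz : lam • w = 0 := by rw [hwl, hxy]
        rcases smul_eq_zero.mp hz with h | h
        · exact absurd h hlam.ne'
        · exact h
      rw [hxeq, ← hw0]; exact hw
    · intro h0
      have key2 := hmono x y 0 w h0 hw
      have hw' : w = lam⁻¹ • (x - y) := by
        rw [← hwl, smul_smul, inv_mul_cancel₀ hlam.ne', one_smul]
      rw [hw', zero_sub, inner_neg_left, real_inner_smul_left,
        real_inner_self_eq_norm_sq] at key2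
      have hlaminv : (0:ℝ) < lam⁻¹ := by positivity
      have hn2 : ‖x - y‖ ^ 2 ≤ 0 := by nlinarith [key2]
      nlinarith [sq_nonneg ‖x - y‖, norm_nonneg (x - y)]
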